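/- Let A, B be n×n matrices over the finitary tropical semiring FT = (ℝ, max, +). If A = PBQ for some P, Q ∈ M_n(T) where T = ℝ ∪ {-∞}, then there exist P', Q' ∈ M_n(FT) (all entries real) with A = P'BQ'. Consequently A ≤_J B in M_n(FT) if and only if A ≤_J B in M_n(T). -/

import Mathlib

/-- Tropical (max-plus) matrix multiplication: `(X ⊗ Y)_{ij} = max_k (X_{ik} + Y_{kj})`. -/
def tropMul {S : Type*} [SemilatticeSup S] [Add S] {n : ℕ} [NeZero n]
    (X Y : Matrix (Fin n) (Fin n) S) : Matrix (Fin n) (Fin n) S :=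
  fun i j => Finset.univ.sup' Finset.univ_nonempty fun k => X i k + Y k j

/-- Green's `J`-order: `A ≤_J B` iff `A ∈ M¹ B M¹`. -/
def JleGen {M : Type*} (mul : M → M → M) (A B : M) : Prop :=
  A = B ∨ (∃ P, A = mul P B) ∨ (∃ Q, A = mul B Q) ∨ ∃ P Q, A = mul (mul P B) Q

/-- Embed a real matrix into matrices over `T = ℝ ∪ {-∞} = WithBot ℝ`. -/
def toBotMat {n : ℕ} (A : Matrix (Fin n) (Fin n) ℝ) :
    Matrix (Fin n) (Fin n) (WithBot ℝ) := fun i j => (A i j : WithBot ℝ)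

/-- The tropical identity matrix over `T`. -/
def tropId {n : ℕ} : Matrix (Fin n) (Fin n) (WithBot ℝ) :=
  fun i j => if i = j then (0 : WithBot ℝ) else ⊥

lemma tropMul_tropId {n : ℕ} [NeZero n] (X : Matrix (Fin n) (Fin n) (WithBot ℝ)) :
    tropMul X tropId = X := by
  funext i j
  refine le_antisymm (Finset.sup'_le _ _ fun k _ => ?_) ?_
  · by_cases hk : k = j
    · subst hk; simp [tropId]
    · simp [tropId, hk]
  · show X i j ≤ Finset.univ.sup' Finset.univ_nonempty fun k => X i k + tropId k j
    exact le_trans (le_of_eq (by simp [tropId]))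
      (Finset.le_sup' (fun k => X i k + tropId k j) (Finset.mem_univ j))

lemma tropId_tropMul {n : ℕ} [NeZero n] (X : Matrix (Fin n) (Fin n) (WithBot ℝ)) :
    tropMul tropId X = X := by
  funext i j
  refine le_antisymm (Finset.sup'_le _ _ fun k _ => ?_) ?_
  · by_cases hk : i = k
    · subst hk; simp [tropId]
    · simp [tropId, hk]
  · show X i j ≤ Finset.univ.sup' Finset.univ_nonempty fun k => tropId i k + X k j
    exact le_trans (le_of_eq (by simp [tropId]))
      (Finset.le_sup' (fun k => tropId i k + X k j) (Finset.mem_univ i))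

lemma toBotMat_tropMul {n : ℕ} [NeZero n] (X Y : Matrix (Fin n) (Fin n) ℝ) :
    toBotMat (tropMul X Y) = tropMul (toBotMat X) (toBotMat Y) := by
  funext i j
  show ((Finset.univ.sup' Finset.univ_nonempty fun k => X i k + Y k j : ℝ) : WithBot ℝ) = _
  rw [Finset.comp_sup'_eq_sup'_comp _ (fun r : ℝ => (r : WithBot ℝ))
    (fun x y => by exact_mod_cast rfl)]
  rfl

lemma key {n : ℕ} [NeZero n] (A B : Matrix (Fin n) (Fin n) ℝ)
    (P Q : Matrix (Fin n) (Fin n) (WithBot ℝ))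
    (h : toBotMat A = tropMul (tropMul P (toBotMat B)) Q) :
    ∃ P' Q' : Matrix (Fin n) (Fin n) ℝ, A = tropMul (tropMul P' B) Q' := by
  classical
  set p : Fin n → Fin n → ℝ := fun i k => (WithBot.unbotD 0 (P i k)) with hp
  set q : Fin n → Fin n → ℝ := fun l j => (WithBot.unbotD 0 (Q l j)) with hq
  set δ : ℝ := Finset.univ.inf' Finset.univ_nonempty
    (fun t : Fin n × Fin n × Fin n × Fin n =>
      min (A t.1 t.2.1 - B t.2.2.1 t.2.2.2 - q t.2.2.2 t.2.1)
        (min (A t.1 t.2.1 - p t.1 t.2.2.1 - B t.2.2.1 t.2.2.2)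
          ((A t.1 t.2.1 - B t.2.2.1 t.2.2.2) / 2))) with hδ
  have hδle : ∀ i j k l : Fin n,
      δ ≤ min (A i j - B k l - q l j) (min (A i j - p i k - B k l) ((A i j - B k l) / 2)) :=
    fun i j k l => Finset.inf'_le _ (Finset.mem_univ (i, j, k, l))
  refine ⟨fun i k => (WithBot.unbotD δ (P i k)), fun l j => (WithBot.unbotD δ (Q l j)), ?_⟩
  funext i j
  have hij : (A i j : WithBot ℝ) = Finset.univ.sup' Finset.univ_nonempty
      (fun l => (Finset.univ.sup' Finset.univ_nonempty fun k => P i k + (B k l : WithBot ℝ))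
        + Q l j) := congrFun (congrFun h i) j
  -- upper bounds over WithBot
  have hb : ∀ k l : Fin n, P i k + (B k l : WithBot ℝ) + Q l j ≤ (A i j : WithBot ℝ) := by
    intro k l
    calc P i k + (B k l : WithBot ℝ) + Q l j
        ≤ (Finset.univ.sup' Finset.univ_nonempty fun k => P i k + (B k l : WithBot ℝ)) + Q l j :=
          add_le_add_left (Finset.le_sup' (fun k => P i k + (B k l : WithBot ℝ)) (Finset.mem_univ k)) _
      _ ≤ _ := Finset.le_sup' (fun l =>
          (Finset.univ.sup' Finset.univ_nonempty fun k => P i k + (B k l : WithBot ℝ)) + Q l j)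
          (Finset.mem_univ l)
      _ = (A i j : WithBot ℝ) := hij.symm
  -- the entrywise upper bound over ℝ
  have claim : ∀ k l : Fin n,
      (WithBot.unbotD δ (P i k)) + B k l + (WithBot.unbotD δ (Q l j)) ≤ A i j := by
    intro k l
    have hδ1 := (hδle i j k l).trans (min_le_left _ _)
    have hδ2 := ((hδle i j k l).trans (min_le_right _ _)).trans (min_le_left _ _)
    have hδ3 := ((hδle i j k l).trans (min_le_right _ _)).trans (min_le_right _ _)
    rcases eq_or_ne (P i k) ⊥ with hP | hP
    · rcases eq_or_ne (Q l j) ⊥ with hQ | hQ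
      · rw [hP, hQ, WithBot.unbotD_bot]
        linarith
      · obtain ⟨r, hr⟩ := WithBot.ne_bot_iff_exists.mp hQ
        have hql : q l j = r := by rw [hq]; simp [← hr]
        rw [hP, ← hr, WithBot.unbotD_bot, WithBot.unbotD_coe]
        rw [hql] at hδ1
        linarith
    · obtain ⟨s, hs⟩ := WithBot.ne_bot_iff_exists.mp hP
      have hpl : p i k = s := by rw [hp]; simp [← hs]
      rcases eq_or_ne (Q l j) ⊥ with hQ | hQ
      · rw [hQ, ← hs, WithBot.unbotD_bot, WithBot.unbotD_coe]
        rw [hpl] at hδ2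
        linarith
      · obtain ⟨r, hr⟩ := WithBot.ne_bot_iff_exists.mp hQ
        rw [← hs, ← hr, WithBot.unbotD_coe, WithBot.unbotD_coe]
        have := hb k l
        rw [← hs, ← hr] at this
        exact_mod_cast this
  -- maximizer
  obtain ⟨l0, _, hl0⟩ := Finset.exists_mem_eq_sup' (Finset.univ_nonempty)
    (fun l => (Finset.univ.sup' Finset.univ_nonempty fun k => P i k + (B k l : WithBot ℝ)) + Q l j)
  rw [← hij] at hl0
  obtain ⟨k0, _, hk0⟩ := Finset.exists_mem_eq_sup' (Finset.univ_nonempty)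
    (fun k => P i k + (B k l0 : WithBot ℝ))
  rw [hk0] at hl0
  have hne : P i k0 + (B k0 l0 : WithBot ℝ) + Q l0 j ≠ ⊥ := by
    rw [← hl0]; exact WithBot.coe_ne_bot
  have hPne : P i k0 ≠ ⊥ := by
    intro hc; apply hne; rw [hc]; simp
  have hQne : Q l0 j ≠ ⊥ := by
    intro hc; apply hne; rw [hc]; simp
  obtain ⟨s, hs⟩ := WithBot.ne_bot_iff_exists.mp hPne
  obtain ⟨r, hr⟩ := WithBot.ne_bot_iff_exists.mp hQne
  have heq : s + B k0 l0 + r = A i j := by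
    rw [← hs, ← hr] at hl0
    exact_mod_cast hl0.symm
  -- conclude
  show A i j = Finset.univ.sup' Finset.univ_nonempty
    (fun l => (Finset.univ.sup' Finset.univ_nonempty fun k =>
      (WithBot.unbotD δ (P i k)) + B k l) + (WithBot.unbotD δ (Q l j)))
  refine le_antisymm ?_ (Finset.sup'_le _ _ fun l _ => ?_)
  · calc A i j = ((WithBot.unbotD δ (P i k0)) + B k0 l0) + (WithBot.unbotD δ (Q l0 j)) := by
          rw [← hs, ← hr, WithBot.unbotD_coe, WithBot.unbotD_coe]; linarith
      _ ≤ (Finset.univ.sup' Finset.univ_nonempty fun k =>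
            (WithBot.unbotD δ (P i k)) + B k l0) + (WithBot.unbotD δ (Q l0 j)) :=
          add_le_add_left (Finset.le_sup' (fun k => (WithBot.unbotD δ (P i k)) + B k l0) (Finset.mem_univ k0)) _
      _ ≤ _ := Finset.le_sup' (fun l => (Finset.univ.sup' Finset.univ_nonempty fun k =>
            (WithBot.unbotD δ (P i k)) + B k l) + (WithBot.unbotD δ (Q l j))) (Finset.mem_univ l0)
  · have h1 : (Finset.univ.sup' Finset.univ_nonempty fun k =>
        (WithBot.unbotD δ (P i k)) + B k l) ≤ A i j - (WithBot.unbotD δ (Q l j)) :=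
      Finset.sup'_le _ _ fun k _ => by linarith [claim k l]
    linarith [add_le_add_right h1 ((WithBot.unbotD δ (Q l j)))]

theorem stmt8 {n : ℕ} [NeZero n] (A B : Matrix (Fin n) (Fin n) ℝ) :
    (∀ P Q : Matrix (Fin n) (Fin n) (WithBot ℝ),
        toBotMat A = tropMul (tropMul P (toBotMat B)) Q →
        ∃ P' Q' : Matrix (Fin n) (Fin n) ℝ, A = tropMul (tropMul P' B) Q') ∧
      (JleGen tropMul A B ↔ JleGen tropMul (toBotMat A) (toBotMat B)) := by
  refine ⟨fun P Q h => key A B P Q h, ?_, ?_⟩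
  · rintro (rfl | ⟨P, hP⟩ | ⟨Q, hQ⟩ | ⟨P, Q, hPQ⟩)
    · exact Or.inl rfl
    · exact Or.inr (Or.inl ⟨toBotMat P, by rw [hP, toBotMat_tropMul]⟩)
    · exact Or.inr (Or.inr (Or.inl ⟨toBotMat Q, by rw [hQ, toBotMat_tropMul]⟩))
    · exact Or.inr (Or.inr (Or.inr ⟨toBotMat P, toBotMat Q, by
        rw [hPQ, toBotMat_tropMul, toBotMat_tropMul]⟩))
  · rintro (hE | ⟨P, hP⟩ | ⟨Q, hQ⟩ | ⟨P, Q, hPQ⟩)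
    · refine Or.inl (funext fun i => funext fun j => ?_)
      have : (A i j : WithBot ℝ) = (B i j : WithBot ℝ) := congrFun (congrFun hE i) j
      exact_mod_cast this
    · obtain ⟨P', Q', h⟩ := key A B P tropId (by rw [hP, tropMul_tropId])
      exact Or.inr (Or.inr (Or.inr ⟨P', Q', h⟩))
    · obtain ⟨P', Q', h⟩ := key A B tropId Q (by rw [hQ, tropId_tropMul])
      exact Or.inr (Or.inr (Or.inr ⟨P', Q', h⟩))
    · obtain ⟨P', Q', h⟩ := key A B P Q hPQ
      exact Or.inr (Or.inr (Or.inr ⟨P', Q', h⟩))
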